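/- For every signed graph (G,σ), the zero-free chromatic number γ*(G,σ) equals the minimum number of antibalanced sets into which V(G) can be partitioned, and also equals the minimum, over all signatures σ' equivalent to σ, of the chromatic number of the spanning subgraph of G formed by the σ'-positive edges. -/

import Mathlib

open SimpleGraph

/-- The switching function associated with `s : V → ℤˣ`. -/
def switchFn {V : Type*} (s : V → ℤˣ) : Sym2 V → ℤˣ :=
  Sym2.lift ⟨fun u v => s u * s v, fun u v => mul_comm (s u) (s v)⟩

/-- A zero-free coloring of `(G, σ)` with `k` colors: a map into
`{-k, …, -1, 1, …, k}` with `c u ≠ σ(uv) * c v` on every edge. -/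
def IsZeroFreeColoring {V : Type*} (G : SimpleGraph V) (σ : Sym2 V → ℤˣ) (k : ℕ)
    (c : V → ℤ) : Prop :=
  (∀ v, 1 ≤ |c v| ∧ |c v| ≤ (k : ℤ)) ∧
    ∀ u v : V, G.Adj u v → c u ≠ (σ s(u, v) : ℤ) * c v

/-- Zaslavsky's zero-free chromatic number `γ*`. -/
noncomputable def gammaStar {V : Type*} (G : SimpleGraph V) (σ : Sym2 V → ℤˣ) : ℕ :=
  sInf {k : ℕ | ∃ c : V → ℤ, IsZeroFreeColoring G σ k c}

/-- A set `S` of vertices is antibalanced in `(G, σ)` if the induced signed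
subgraph on `S` is switching equivalent to the all-negative signature. -/
def AntibalancedOn {V : Type*} (G : SimpleGraph V) (σ : Sym2 V → ℤˣ) (S : Set V) : Prop :=
  ∃ s : V → ℤˣ, ∀ u v : V, u ∈ S → v ∈ S → G.Adj u v →
    switchFn s s(u, v) * σ s(u, v) = -1

/-- The spanning subgraph of positive edges of `(G, σ)`. -/
def posSubgraph {V : Type*} (G : SimpleGraph V) (σ : Sym2 V → ℤˣ) : SimpleGraph V where
  Adj u v := G.Adj u v ∧ σ s(u, v) = 1
  symm := by
    constructor
    intro u v h
    exact ⟨h.1.symm, by rw [Sym2.eq_swap]; exact h.2⟩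
  loopless := ⟨fun v h => G.loopless.irrefl v h.1⟩

/-- The zero-free chromatic number equals the minimum number of antibalanced
sets into which the vertex set can be partitioned, and also the minimum over all
equivalent signatures `σ'` of the chromatic number of the subgraph of
`σ'`-positive edges. -/
theorem gammaStar_eq_min_antibalanced_partition_eq_min_chrom_pos
    {V : Type*} [Fintype V] (G : SimpleGraph V) (σ : Sym2 V → ℤˣ) :
    gammaStar G σ =
        sInf {m : ℕ | ∃ c : V → Fin m, ∀ i : Fin m, AntibalancedOn G σ (c ⁻¹' {i})} ∧
      gammaStar G σ =
        sInf {m : ℕ | ∃ s : V → ℤˣ,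
          (posSubgraph G (fun e => switchFn s e * σ e)).Colorable m} := by
  classical
  set S1 := {k : ℕ | ∃ c : V → ℤ, IsZeroFreeColoring G σ k c} with hS1
  set S2 := {m : ℕ | ∃ c : V → Fin m, ∀ i : Fin m, AntibalancedOn G σ (c ⁻¹' {i})} with hS2
  set S3 := {m : ℕ | ∃ s : V → ℤˣ,
      (posSubgraph G (fun e => switchFn s e * σ e)).Colorable m} with hS3
  have h12 : S1 ⊆ S2 := by
    rintro k ⟨c, hbd, hcol⟩
    set s : V → ℤˣ := fun v => if 0 < c v then 1 else -1 with hs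
    have key : ∀ v, ((s v : ℤ)) * |c v| = c v := by
      intro v
      by_cases h : 0 < c v
      · simp [hs, h, abs_of_pos h]
      · simp [hs, h, abs_of_nonpos (le_of_not_gt h)]
    have hbd' : ∀ v, 1 ≤ (c v).natAbs ∧ (c v).natAbs ≤ k := by
      intro v
      obtain ⟨h1, h2⟩ := hbd v
      rw [Int.abs_eq_natAbs] at h1 h2
      exact ⟨by exact_mod_cast h1, by exact_mod_cast h2⟩
    refine ⟨fun v => ⟨(c v).natAbs - 1, by have := hbd' v; omega⟩, ?_⟩
    intro i
    refine ⟨s, ?_⟩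
    intro u v hu hv hadj
    simp only [Set.mem_preimage, Set.mem_singleton_iff] at hu hv
    rw [← hv, Fin.mk.injEq] at hu
    have habs : |c u| = |c v| := by
      rw [Int.abs_eq_natAbs, Int.abs_eq_natAbs]
      have h1 := (hbd' u).1; have h2 := (hbd' v).1
      have : (c u).natAbs = (c v).natAbs := by omega
      rw [this]
    have hne := hcol u v hadj
    have hne' : (s u : ℤ) * |c u| ≠ (σ s(u, v) : ℤ) * ((s v : ℤ) * |c v|) := by
      rw [key, key]; exact hne
    rw [habs] at hne'
    have hpos : (0 : ℤ) < |c v| := lt_of_lt_of_le one_pos (hbd v).1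
    have hgoal : switchFn s s(u, v) = s u * s v := by simp [switchFn]
    rw [hgoal]
    rcases Int.units_eq_one_or (s u) with h1 | h1 <;>
      rcases Int.units_eq_one_or (s v) with h2 | h2 <;>
      rcases Int.units_eq_one_or (σ s(u, v)) with h3 | h3 <;>
      rw [h1, h2, h3] <;> rw [h1, h2, h3] at hne' <;> push_cast at hne' <;>
      first
        | rfl
        | (exfalso; apply hne'; ring)
  have h23 : S2 ⊆ S3 := by
    rintro m ⟨c, hc⟩
    set s : V → ℤˣ := fun v => (hc (c v)).choose v with hs
    refine ⟨s, ⟨SimpleGraph.Coloring.mk c ?_⟩⟩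
    intro u v huv hcc
    obtain ⟨hadj, hpos⟩ := huv
    have hu : u ∈ c ⁻¹' {c v} := by simp [hcc]
    have hv : v ∈ c ⁻¹' {c v} := by simp
    have spec := (hc (c v)).choose_spec u v hu hv hadj
    have hsu : s u = (hc (c v)).choose u := by
      show (hc (c u)).choose u = (hc (c v)).choose u
      exact congrArg (fun i => (hc i).choose u) hcc
    have hsv : s v = (hc (c v)).choose v := rfl
    have hsw : switchFn s s(u, v) = switchFn ((hc (c v)).choose) s(u, v) := by
      simp only [switchFn, Sym2.lift_mk]
      rw [hsu, hsv]
      rfl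
    have hpos' : switchFn s s(u, v) * σ s(u, v) = 1 := hpos
    rw [hsw, spec] at hpos'
    exact absurd hpos' (by decide)
  have h31 : S3 ⊆ S1 := by
    rintro m ⟨s, hcol⟩
    obtain ⟨f⟩ := hcol
    set c : V → ℤ := fun v => (s v : ℤ) * (((f v : ℕ) : ℤ) + 1) with hc
    have habs : ∀ v, |c v| = ((f v : ℕ) : ℤ) + 1 := by
      intro v
      rw [hc]
      simp only [abs_mul]
      have h1 : |(s v : ℤ)| = 1 := by
        rcases Int.units_eq_one_or (s v) with h | h <;> simp [h]
      rw [h1, one_mul]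
      exact abs_of_nonneg (by positivity)
    refine ⟨c, ⟨?_, ?_⟩⟩
    · intro v
      rw [habs]
      have := (f v).isLt
      omega
    · intro u v hadj heq
      have habseq : |c u| = |c v| := by
        rw [heq, abs_mul]
        have h1 : |(σ s(u, v) : ℤ)| = 1 := by
          rcases Int.units_eq_one_or (σ s(u, v)) with h | h <;> simp [h]
        rw [h1, one_mul]
      have hfv : f u = f v := by
        rw [habs, habs] at habseq
        have : (f u : ℕ) = (f v : ℕ) := by omega
        exact Fin.ext this
      have hnadj : ¬ (posSubgraph G (fun e => switchFn s e * σ e)).Adj u v := by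
        intro h
        exact f.valid h (by rw [hfv])
      have hne1 : switchFn s s(u, v) * σ s(u, v) ≠ 1 := by
        intro h
        exact hnadj ⟨hadj, h⟩
      have hm1 : switchFn s s(u, v) * σ s(u, v) = -1 := by
        rcases Int.units_eq_one_or (switchFn s s(u, v) * σ s(u, v)) with h | h
        · exact absurd h hne1
        · exact h
      have hsw : switchFn s s(u, v) = s u * s v := by simp [switchFn]
      rw [hsw] at hm1
      have heq' : (s u : ℤ) * (((f v : ℕ) : ℤ) + 1) =
          (σ s(u, v) : ℤ) * ((s v : ℤ) * (((f v : ℕ) : ℤ) + 1)) := by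
        have h0 : c u = (σ s(u, v) : ℤ) * c v := heq
        rw [hc] at h0
        simp only [hfv] at h0
        exact h0
      rcases Int.units_eq_one_or (s u) with h1 | h1 <;>
        rcases Int.units_eq_one_or (s v) with h2 | h2 <;>
        rcases Int.units_eq_one_or (σ s(u, v)) with h3 | h3 <;>
        rw [h1, h2, h3] at hm1 heq' <;> push_cast at heq' <;>
        first
          | (exact absurd hm1 (by decide))
          | omega
  have e12 : S1 = S2 := Set.Subset.antisymm h12 (fun k hk => h31 (h23 hk))
  have e13 : S1 = S3 := Set.Subset.antisymm (fun k hk => h23 (h12 hk)) h31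
  exact ⟨congrArg sInf e12, congrArg sInf e13⟩
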